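/- arXiv:2011.08022 — 2 statements merged into one kernel-verified Lean document; each statement's English description precedes it below -/
import Mathlib

section
/- Let L be a Lipschitz convolution kernel on the torus Π^d supported in B(0, r), and let L_ε(x) = ε^{−d} L(x/ε). For M ≥ 1/ε, and L_M the hypercube averaging operator associated with a decomposition of Π^d into M^d disjoint hypercubes of side 1/M, one has ‖L_ε⋆μ − L_ε⋆L_M[μ]‖_{L¹(Π^d)} ≤ C/(M ε) for every probability measure μ on Π^d, where C depends only on d and on ‖L‖_{W^{1,∞}}. -/
open MeasureTheory

open Metric Set in
set_option maxHeartbeats 1000000 in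
private theorem aux7 (d : ℕ) (μ : Measure (Fin d → ℝ)) [IsProbabilityMeasure μ]
    (g : (Fin d → ℝ) → ℝ) (hg : Continuous g) (ρ A B : ℝ) (hρ : 0 < ρ)
    (hA : 0 ≤ A) (hB : 0 ≤ B)
    (hgsupp : ∀ v : Fin d → ℝ, ρ ≤ ‖v‖ → g v = 0)
    (hgbd : ∀ v : Fin d → ℝ, |g v| ≤ A)
    (hglip : ∀ a b : Fin d → ℝ, |g a - g b| ≤ B * ‖a - b‖)
    (M : ℕ) (hM : 0 < (M : ℝ)) :
    ∫ x : Fin d → ℝ,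
        |(∫ y, g (x - y) ∂μ)
          - ∫ y, g (x - y) * ((M : ℝ) ^ d *
              (μ {z | ∀ t, ⌊(M : ℝ) * z t⌋ = ⌊(M : ℝ) * y t⌋}).toReal)|
      ≤ (B * (M : ℝ)⁻¹) * (2 * (ρ + (M : ℝ)⁻¹)) ^ d := by
  classical
  set Q : (Fin d → ℝ) → Set (Fin d → ℝ) :=
    fun w => {v | ∀ t, ⌊(M : ℝ) * v t⌋ = ⌊(M : ℝ) * w t⌋} with hQdef
  show (∫ x : Fin d → ℝ,
      |(∫ y, g (x - y) ∂μ) - ∫ y, g (x - y) * ((M : ℝ) ^ d * (μ (Q y)).toReal)|)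
      ≤ (B * (M : ℝ)⁻¹) * (2 * (ρ + (M : ℝ)⁻¹)) ^ d
  -- basic facts about the cubes
  have hQmeas : ∀ w, MeasurableSet (Q w) := by
    intro w
    have h1 : Q w = ⋂ t, (fun v : Fin d → ℝ => ⌊(M : ℝ) * v t⌋) ⁻¹' {⌊(M : ℝ) * w t⌋} := by
      ext v; simp [hQdef, Set.mem_iInter]
    rw [h1]
    exact MeasurableSet.iInter fun t =>
      (Int.measurable_floor.comp ((measurable_pi_apply t).const_mul _))
        (measurableSet_singleton _)
  have hQsymm : ∀ v w, v ∈ Q w ↔ w ∈ Q v := by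
    intro v w; constructor <;> intro h t <;> exact (h t).symm
  have hQbox : ∀ w, Q w = Set.pi Set.univ
      (fun t => Ico ((⌊(M : ℝ) * w t⌋ : ℝ) / M) (((⌊(M : ℝ) * w t⌋ : ℝ) + 1) / M)) := by
    intro w
    ext v
    simp only [hQdef, Set.mem_setOf_eq, Set.mem_pi, Set.mem_univ, forall_true_left, Set.mem_Ico]
    refine forall_congr' fun t => ?_
    rw [Int.floor_eq_iff, div_le_iff₀ hM, lt_div_iff₀ hM]
    constructor <;> rintro ⟨h1, h2⟩ <;> constructor <;> nlinarith
  have hQvol : ∀ w, volume (Q w) = ENNReal.ofReal ((M : ℝ)⁻¹) ^ d := by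
    intro w
    rw [hQbox w, volume_pi_pi]
    have h1 : ∀ t : Fin d,
        volume (Ico ((⌊(M : ℝ) * w t⌋ : ℝ) / M) (((⌊(M : ℝ) * w t⌋ : ℝ) + 1) / M))
          = ENNReal.ofReal ((M : ℝ)⁻¹) := by
      intro t
      rw [Real.volume_Ico]
      congr 1
      field_simp
      ring
    simp [h1]
  have hQvolReal : ∀ w, (volume (Q w)).toReal = ((M : ℝ)⁻¹) ^ d := by
    intro w
    rw [hQvol w, ← ENNReal.ofReal_pow (by positivity), ENNReal.toReal_ofReal (by positivity)]
  have hQvolfin : ∀ w, volume (Q w) < ⊤ := by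
    intro w; rw [hQvol]
    exact ENNReal.pow_lt_top ENNReal.ofReal_lt_top
  have hMQ : ((M : ℝ)) ^ d * ((M : ℝ)⁻¹) ^ d = 1 := by
    rw [← mul_pow, mul_inv_cancel₀ (ne_of_gt hM), one_pow]
  have hQdiam : ∀ w, ∀ v ∈ Q w, ‖v - w‖ ≤ (M : ℝ)⁻¹ := by
    intro w v hv
    rw [pi_norm_le_iff_of_nonneg (by positivity)]
    intro t
    rw [Pi.sub_apply]
    have h := hv t
    have h1 := Int.floor_le ((M : ℝ) * v t)
    have h2 := Int.lt_floor_add_one ((M : ℝ) * v t)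
    have h3 := Int.floor_le ((M : ℝ) * w t)
    have h4 := Int.lt_floor_add_one ((M : ℝ) * w t)
    rw [h] at h1 h2
    have h5 : (M : ℝ) * |v t - w t| ≤ 1 := by
      rw [← abs_of_pos hM, ← abs_mul, mul_sub]
      rw [abs_le]; constructor <;> nlinarith
    have h6 : (M : ℝ) * (M : ℝ)⁻¹ = 1 := mul_inv_cancel₀ (ne_of_gt hM)
    rw [Real.norm_eq_abs]
    nlinarith [abs_nonneg (v t - w t)]
  -- integrability of translates of g
  have hgint : Integrable g := by
    apply hg.integrable_of_hasCompactSupport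
    apply HasCompactSupport.intro (isCompact_closedBall (0 : Fin d → ℝ) ρ)
    intro v hv
    apply hgsupp
    rw [Metric.mem_closedBall, dist_zero_right] at hv
    linarith [not_le.mp hv]
  have hgtrans : ∀ x : Fin d → ℝ, Integrable (fun y => g (x - y)) :=
    fun x => hgint.comp_sub_left x
  -- integrability wrt μ of the two z-functions
  have hInt1 : ∀ x, Integrable (fun z => g (x - z)) μ := by
    intro x
    refine Integrable.mono' (integrable_const A)
      ((hg.comp (continuous_const.sub continuous_id)).aestronglyMeasurable) ?_
    exact Filter.Eventually.of_forall fun z => by rw [Real.norm_eq_abs]; exact hgbd _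
  -- the product-measurable "same cube" set
  have hSmeas : MeasurableSet {p : (Fin d → ℝ) × (Fin d → ℝ) | p.2 ∈ Q p.1} := by
    have h1 : {p : (Fin d → ℝ) × (Fin d → ℝ) | p.2 ∈ Q p.1}
        = ⋂ t, (fun p : (Fin d → ℝ) × (Fin d → ℝ) =>
            ⌊(M : ℝ) * p.2 t⌋ - ⌊(M : ℝ) * p.1 t⌋) ⁻¹' {0} := by
      ext p
      simp only [hQdef, Set.mem_setOf_eq, Set.mem_iInter, Set.mem_preimage,
        Set.mem_singleton_iff, sub_eq_zero]
    rw [h1]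
    refine MeasurableSet.iInter fun t => ?_
    have m1 : Measurable fun p : (Fin d → ℝ) × (Fin d → ℝ) => ⌊(M : ℝ) * p.2 t⌋ :=
      Int.measurable_floor.comp (((measurable_pi_apply t).comp measurable_snd).const_mul _)
    have m2 : Measurable fun p : (Fin d → ℝ) × (Fin d → ℝ) => ⌊(M : ℝ) * p.1 t⌋ :=
      Int.measurable_floor.comp (((measurable_pi_apply t).comp measurable_fst).const_mul _)
    exact (m1.sub m2) (measurableSet_singleton _)
  -- second z-function: measurability and integrability
  have hcellmeas : ∀ x, AEStronglyMeasurable (fun z => ∫ y in Q z, g (x - y)) μ := by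
    intro x
    have h1 : Measurable fun p : (Fin d → ℝ) × (Fin d → ℝ) =>
        {q : (Fin d → ℝ) × (Fin d → ℝ) | q.2 ∈ Q q.1}.indicator
          (fun q => g (x - q.2)) p :=
      (hg.measurable.comp (measurable_const.sub measurable_snd)).indicator hSmeas
    have h2 := (h1.stronglyMeasurable.aestronglyMeasurable
      (μ := μ.prod volume)).integral_prod_right'
    have h3 : (fun z => ∫ y, {q : (Fin d → ℝ) × (Fin d → ℝ) | q.2 ∈ Q q.1}.indicator
        (fun q => g (x - q.2)) (z, y)) = fun z => ∫ y in Q z, g (x - y) := by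
      funext z
      rw [← integral_indicator (hQmeas z)]
      refine integral_congr_ae (Filter.Eventually.of_forall fun y => ?_)
      simp [Set.indicator_apply]
    rwa [h3] at h2
  have hInt2 : ∀ x, Integrable (fun z => (M : ℝ) ^ d * ∫ y in Q z, g (x - y)) μ := by
    intro x
    refine Integrable.mono' (integrable_const ((M : ℝ) ^ d * (A * ((M : ℝ)⁻¹) ^ d)))
      ((hcellmeas x).const_mul _) (Filter.Eventually.of_forall fun z => ?_)
    rw [Real.norm_eq_abs, abs_mul, abs_of_pos (pow_pos hM d)]
    have h1 : ‖∫ y in Q z, g (x - y)‖ ≤ A * (volume (Q z)).toReal := by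
      refine norm_setIntegral_le_of_norm_le_const (hQvolfin z) ?_
      · intro y _; rw [Real.norm_eq_abs]; exact hgbd _
    rw [Real.norm_eq_abs, hQvolReal] at h1
    have := pow_pos hM d
    nlinarith
  -- Fubini step
  have keyrw : ∀ x : Fin d → ℝ,
      (∫ y, g (x - y) * ((M : ℝ) ^ d * (μ (Q y)).toReal))
        = ∫ z, ((M : ℝ) ^ d * ∫ y in Q z, g (x - y)) ∂μ := by
    intro x
    set F : (Fin d → ℝ) × (Fin d → ℝ) → ℝ := fun p =>
      ((M : ℝ) ^ d * g (x - p.1)) *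
        {q : (Fin d → ℝ) × (Fin d → ℝ) | q.2 ∈ Q q.1}.indicator 1 p with hFdef
    have hFmeas : Measurable F :=
      ((hg.measurable.comp (measurable_const.sub measurable_fst)).const_mul _).mul
        (measurable_one.indicator hSmeas)
    have hFaesm : AEStronglyMeasurable F (volume.prod μ) :=
      hFmeas.stronglyMeasurable.aestronglyMeasurable
    have hFy : ∀ y, (fun z => F (y, z))
        = fun z => ((M : ℝ) ^ d * g (x - y)) * (Q y).indicator 1 z := by
      intro y; funext z; simp [hFdef, Set.indicator_apply]
    have hFyint : ∀ y, Integrable (fun z => F (y, z)) μ := by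
      intro y
      rw [hFy y]
      exact (((integrable_const (1 : ℝ)).indicator (hQmeas y))).const_mul _
    have hFint : Integrable F (volume.prod μ) := by
      rw [integrable_prod_iff hFaesm]
      constructor
      · exact Filter.Eventually.of_forall hFyint
      · refine Integrable.mono' (((hgtrans x).norm.const_mul ((M : ℝ) ^ d)))
          hFaesm.norm.integral_prod_right'
          (Filter.Eventually.of_forall fun y => ?_)
        have h0 : ∀ z, ‖F (y, z)‖ ≤ (M : ℝ) ^ d * ‖g (x - y)‖ := by
          intro z
          rw [show F (y, z) = (M : ℝ) ^ d * g (x - y) * (Q y).indicator 1 z from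
            congrFun (hFy y) z]
          simp only [Set.indicator_apply]
          by_cases h : z ∈ Q y
          · simp [h, Real.norm_eq_abs, abs_mul, abs_of_pos (pow_pos hM d)]
          · simp only [if_neg h, mul_zero, norm_zero, Real.norm_eq_abs]
            positivity
        have h1 : ∫ z, ‖F (y, z)‖ ∂μ ≤ ∫ _z, (M : ℝ) ^ d * ‖g (x - y)‖ ∂μ :=
          integral_mono (hFyint y).norm (integrable_const _) h0
        rw [integral_const, probReal_univ, one_smul] at h1
        rw [Real.norm_eq_abs, abs_of_nonneg (integral_nonneg fun z => norm_nonneg _)]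
        exact h1
    calc (∫ y, g (x - y) * ((M : ℝ) ^ d * (μ (Q y)).toReal))
        = ∫ y, ∫ z, F (y, z) ∂μ := by
          congr 1; funext y
          rw [hFy y, integral_const_mul, integral_indicator_one (hQmeas y), measureReal_def]
          ring
      _ = ∫ z, (∫ y, F (y, z)) ∂μ := integral_integral_swap (by exact hFint)
      _ = ∫ z, ((M : ℝ) ^ d * ∫ y in Q z, g (x - y)) ∂μ := by
          refine integral_congr_ae (Filter.Eventually.of_forall fun z => ?_)
          show (∫ y, F (y, z)) = (M : ℝ) ^ d * ∫ y in Q z, g (x - y)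
          have h2 : (fun y => F (y, z))
              = fun y => (Q z).indicator (fun y => (M : ℝ) ^ d * g (x - y)) y := by
            funext y
            simp only [hFdef, Set.indicator_apply, Set.mem_setOf_eq]
            by_cases h : z ∈ Q y
            · rw [if_pos h, if_pos ((hQsymm z y).mp h)]; simp
            · rw [if_neg h, if_neg (fun hc => h ((hQsymm y z).mp hc))]; simp
          rw [h2, integral_indicator (hQmeas z), ← integral_const_mul]
  -- representation of the difference
  have hrep : ∀ x : Fin d → ℝ,
      (∫ y, g (x - y) ∂μ) - (∫ y, g (x - y) * ((M : ℝ) ^ d * (μ (Q y)).toReal))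
        = ∫ z, (g (x - z) - (M : ℝ) ^ d * ∫ y in Q z, g (x - y)) ∂μ := by
    intro x
    rw [keyrw x, ← integral_sub (hInt1 x) (hInt2 x)]
  -- pointwise bound on the integrand
  set R : ℝ := ρ + (M : ℝ)⁻¹ with hRdef
  have hR : 0 < R := by positivity
  set Bc : ℝ := B * (M : ℝ)⁻¹ with hBcdef
  have hBc : 0 ≤ Bc := by positivity
  have hGbound : ∀ x z : Fin d → ℝ,
      |g (x - z) - (M : ℝ) ^ d * ∫ y in Q z, g (x - y)|
        ≤ (if dist x z ≤ R then Bc else 0) := by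
    intro x z
    by_cases hxz : dist x z ≤ R
    · rw [if_pos hxz]
      have hconst : g (x - z) = (M : ℝ) ^ d * ∫ _y in Q z, g (x - z) := by
        rw [setIntegral_const, measureReal_def, hQvolReal, smul_eq_mul, ← mul_assoc, hMQ, one_mul]
      rw [hconst, ← mul_sub,
        ← integral_sub (integrableOn_const (C := g (x - z)) (hQvolfin z).ne)
          ((hgtrans x).integrableOn),
        abs_mul, abs_of_pos (pow_pos hM d)]
      have hb : ‖∫ y in Q z, (g (x - z) - g (x - y))‖
          ≤ (B * (M : ℝ)⁻¹) * (volume (Q z)).toReal := by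
        refine norm_setIntegral_le_of_norm_le_const (hQvolfin z) ?_
        · intro y hy
          rw [Real.norm_eq_abs]
          have h1 : (x - z) - (x - y) = y - z := by abel
          calc |g (x - z) - g (x - y)| ≤ B * ‖(x - z) - (x - y)‖ := hglip _ _
            _ = B * ‖y - z‖ := by rw [h1]
            _ ≤ B * (M : ℝ)⁻¹ := by
                have := hQdiam z y hy
                exact mul_le_mul_of_nonneg_left this hB
      rw [Real.norm_eq_abs, hQvolReal] at hb
      calc (M : ℝ) ^ d * |∫ y in Q z, (g (x - z) - g (x - y))|
          ≤ (M : ℝ) ^ d * ((B * (M : ℝ)⁻¹) * ((M : ℝ)⁻¹) ^ d) :=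
            mul_le_mul_of_nonneg_left hb (le_of_lt (pow_pos hM d))
        _ = (B * (M : ℝ)⁻¹) * ((M : ℝ) ^ d * ((M : ℝ)⁻¹) ^ d) := by ring
        _ = Bc := by rw [hMQ, mul_one]
    · rw [if_neg hxz]
      push_neg at hxz
      rw [dist_eq_norm] at hxz
      have h1 : g (x - z) = 0 := by
        apply hgsupp
        have : (0:ℝ) < (M : ℝ)⁻¹ := by positivity
        rw [hRdef] at hxz
        linarith
      have h2 : ∫ y in Q z, g (x - y) = 0 := by
        apply setIntegral_eq_zero_of_forall_eq_zero
        intro y hy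
        apply hgsupp
        have hyz := hQdiam z y hy
        have h3 : ‖x - z‖ ≤ ‖x - y‖ + ‖y - z‖ := by
          have h4 : x - z = (x - y) + (y - z) := by abel
          rw [h4]; exact norm_add_le _ _
        rw [hRdef] at hxz
        linarith
      rw [h1, h2]
      simp
  -- integrability of the difference in z
  have hGint : ∀ x, Integrable
      (fun z => g (x - z) - (M : ℝ) ^ d * ∫ y in Q z, g (x - y)) μ :=
    fun x => (hInt1 x).sub (hInt2 x)
  -- integrability of the ite bound in z
  have hiteq : ∀ x : Fin d → ℝ, (fun z => if dist x z ≤ R then Bc else 0)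
      = (closedBall x R).indicator (fun _ => Bc) := by
    intro x
    funext z
    simp [Set.indicator_apply, Metric.mem_closedBall, dist_comm]
  have hiteInt : ∀ x : Fin d → ℝ,
      Integrable (fun z => if dist x z ≤ R then Bc else 0) μ := by
    intro x
    rw [hiteq x]
    exact (integrable_const Bc).indicator measurableSet_closedBall
  -- final assembly
  by_cases hInt : Integrable (fun x : Fin d → ℝ =>
      |(∫ y, g (x - y) ∂μ) - ∫ y, g (x - y) * ((M : ℝ) ^ d * (μ (Q y)).toReal)|)
  case neg =>
    rw [integral_undef hInt]
    positivity
  rw [integral_eq_lintegral_of_nonneg_ae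
    (Filter.Eventually.of_forall fun x => abs_nonneg _) hInt.1]
  refine ENNReal.toReal_le_of_le_ofReal (by positivity) ?_
  calc ∫⁻ x, ENNReal.ofReal
        |(∫ y, g (x - y) ∂μ) - ∫ y, g (x - y) * ((M : ℝ) ^ d * (μ (Q y)).toReal)|
      ≤ ∫⁻ x, ∫⁻ z, ENNReal.ofReal (if dist x z ≤ R then Bc else 0) ∂μ := by
        refine lintegral_mono fun x => ?_
        rw [hrep x]
        have habs : |∫ z, (g (x - z) - (M : ℝ) ^ d * ∫ y in Q z, g (x - y)) ∂μ|
            ≤ ∫ z, (if dist x z ≤ R then Bc else 0) ∂μ := by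
          calc |∫ z, (g (x - z) - (M : ℝ) ^ d * ∫ y in Q z, g (x - y)) ∂μ|
              ≤ ∫ z, |g (x - z) - (M : ℝ) ^ d * ∫ y in Q z, g (x - y)| ∂μ := by
                simpa [Real.norm_eq_abs] using norm_integral_le_integral_norm
                  (μ := μ) (fun z => g (x - z) - (M : ℝ) ^ d * ∫ y in Q z, g (x - y))
            _ ≤ ∫ z, (if dist x z ≤ R then Bc else 0) ∂μ :=
                integral_mono (hGint x).abs (hiteInt x) (hGbound x)
        refine le_trans (ENNReal.ofReal_le_ofReal habs) ?_
        rw [integral_eq_lintegral_of_nonneg_ae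
          (Filter.Eventually.of_forall fun z => by positivity) (hiteInt x).1]
        exact ENNReal.ofReal_toReal_le
    _ = ∫⁻ z, (∫⁻ x, ENNReal.ofReal (if dist x z ≤ R then Bc else 0)) ∂μ := by
        have hmeas : Measurable (Function.uncurry fun x z : Fin d → ℝ =>
            ENNReal.ofReal (if dist x z ≤ R then Bc else 0)) := by
          apply Measurable.ennreal_ofReal
          have hset : MeasurableSet {p : (Fin d → ℝ) × (Fin d → ℝ) | dist p.1 p.2 ≤ R} :=
            measurableSet_le (measurable_fst.dist measurable_snd) measurable_const
          exact Measurable.ite hset measurable_const measurable_const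
        exact lintegral_lintegral_swap (μ := volume) (ν := μ)
          (f := fun x z : Fin d → ℝ => ENNReal.ofReal (if dist x z ≤ R then Bc else 0))
          hmeas.aemeasurable
    _ ≤ ENNReal.ofReal (Bc * (2 * R) ^ d) := by
        have hin : ∀ z : Fin d → ℝ, ∫⁻ x, ENNReal.ofReal (if dist x z ≤ R then Bc else 0)
            = ENNReal.ofReal Bc * ENNReal.ofReal (2 * R) ^ d := by
          intro z
          have h1 : (fun x => ENNReal.ofReal (if dist x z ≤ R then Bc else 0))
              = (closedBall z R).indicator (fun _ => ENNReal.ofReal Bc) := by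
            funext x
            simp only [Set.indicator_apply, Metric.mem_closedBall]
            split_ifs <;> simp
          have hballvol : volume (closedBall z R) = ENNReal.ofReal (2 * R) ^ d := by
            rw [volume_pi_closedBall _ (le_of_lt hR)]
            simp [Real.volume_closedBall, Finset.prod_const]
          rw [h1, lintegral_indicator measurableSet_closedBall, setLIntegral_const,
            hballvol]
        calc ∫⁻ z, (∫⁻ x, ENNReal.ofReal (if dist x z ≤ R then Bc else 0)) ∂μ
            = ∫⁻ _z, ENNReal.ofReal Bc * ENNReal.ofReal (2 * R) ^ d ∂μ :=
              lintegral_congr fun z => hin z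
          _ = ENNReal.ofReal Bc * ENNReal.ofReal (2 * R) ^ d := by
              rw [lintegral_const, measure_univ, mul_one]
          _ = ENNReal.ofReal (Bc * (2 * R) ^ d) := by
              rw [ENNReal.ofReal_mul hBc, ENNReal.ofReal_pow (by positivity)]
          _ ≤ ENNReal.ofReal (Bc * (2 * R) ^ d) := le_rfl
    _ ≤ ENNReal.ofReal ((B * (M : ℝ)⁻¹) * (2 * (ρ + (M : ℝ)⁻¹)) ^ d) := le_rfl

set_option maxHeartbeats 1000000 in
/-- For a Lipschitz convolution kernel `L` supported in `B(0,r)`, with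
`L_ε(x) = ε^{−d} L(x/ε)`, and `L_M[μ]` the averaging operator over the grid of
hypercubes of side `1/M`, one has `‖L_ε⋆μ − L_ε⋆L_M[μ]‖_{L¹} ≤ C/(Mε)` for every
probability measure `μ`, where `C` depends only on `d` and `L`. -/
theorem stmt_7 (d : ℕ) (hd : 0 < d) (r : ℝ) (hr : 0 < r) (K : NNReal)
    (L : (Fin d → ℝ) → ℝ) (hLip : LipschitzWith K L)
    (hsupp : ∀ x : Fin d → ℝ, r ≤ ‖x‖ → L x = 0) :
    ∃ C : ℝ, 0 < C ∧
      ∀ (μ : Measure (Fin d → ℝ)), IsProbabilityMeasure μ →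
        ∀ (ε : ℝ) (M : ℕ), 0 < ε → 1 ≤ (M : ℝ) * ε →
          (∫ x : Fin d → ℝ,
              |(∫ y, (ε ^ d)⁻¹ * L (ε⁻¹ • (x - y)) ∂μ)
                - ∫ y, (ε ^ d)⁻¹ * L (ε⁻¹ • (x - y)) *
                    ((M : ℝ) ^ d *
                      (μ {z | ∀ t, ⌊(M : ℝ) * z t⌋ = ⌊(M : ℝ) * y t⌋}).toReal)|)
            ≤ C / ((M : ℝ) * ε) := by
  classical
  refine ⟨((K : ℝ) + 1) * (2 * (r + 1)) ^ d, by positivity, ?_⟩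
  intro μ hμ ε M hε hMε
  haveI := hμ
  have hM0 : 0 < (M : ℝ) := by
    by_contra h
    push_neg at h
    nlinarith
  have hMinv : (M : ℝ)⁻¹ ≤ ε := by
    rw [inv_le_iff_one_le_mul₀ hM0]
    linarith
  have hεd : (0 : ℝ) < ε ^ d := pow_pos hε d
  set g : (Fin d → ℝ) → ℝ := fun v => (ε ^ d)⁻¹ * L (ε⁻¹ • v) with hgdef
  have hg : Continuous g := continuous_const.mul (hLip.continuous.comp (continuous_const_smul _))
  have hgsupp : ∀ v : Fin d → ℝ, ε * r ≤ ‖v‖ → g v = 0 := by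
    intro v hv
    have h1 : r ≤ ‖ε⁻¹ • v‖ := by
      rw [norm_smul, Real.norm_eq_abs, abs_of_pos (inv_pos.mpr hε)]
      have h2 : ε⁻¹ * (ε * r) ≤ ε⁻¹ * ‖v‖ :=
        mul_le_mul_of_nonneg_left hv (le_of_lt (inv_pos.mpr hε))
      rw [← mul_assoc, inv_mul_cancel₀ (ne_of_gt hε), one_mul] at h2
      exact h2
    rw [hgdef]
    simp [hsupp _ h1]
  have hgbd : ∀ v : Fin d → ℝ, |g v| ≤ (ε ^ d)⁻¹ * ((K : ℝ) * (2 * r)) := by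
    intro v
    have habs : ∀ w : Fin d → ℝ, |L w| ≤ (K : ℝ) * (2 * r) := by
      intro w
      by_cases hw : r ≤ ‖w‖
      · rw [hsupp w hw, abs_zero]; positivity
      · push_neg at hw
        set t0 : Fin d := ⟨0, hd⟩
        set y : Fin d → ℝ := Function.update w t0 (w t0 + 2 * r) with hydef
        have hwt0 : |w t0| < r := by
          have := norm_le_pi_norm w t0
          rw [Real.norm_eq_abs] at this
          linarith
        have hy0 : L y = 0 := by
          apply hsupp
          have h2 : y t0 = w t0 + 2 * r := by simp [hydef]
          obtain ⟨hw1, hw2⟩ := abs_lt.mp hwt0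
          have h3 : r ≤ |y t0| := by
            rw [h2, abs_of_pos (by linarith)]
            linarith
          calc r ≤ |y t0| := h3
            _ ≤ ‖y‖ := by rw [← Real.norm_eq_abs]; exact norm_le_pi_norm y t0
        have hdist : ‖w - y‖ ≤ 2 * r := by
          rw [pi_norm_le_iff_of_nonneg (by positivity)]
          intro t
          by_cases ht : t = t0
          · subst ht
            simp only [Pi.sub_apply, hydef, Function.update_self]
            rw [Real.norm_eq_abs]
            rw [show w t0 - (w t0 + 2 * r) = -(2 * r) by ring, abs_neg,
              abs_of_pos (by linarith)]
          · simp only [Pi.sub_apply, hydef, Function.update_of_ne ht]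
            rw [Real.norm_eq_abs, sub_self, abs_zero]
            positivity
        calc |L w| = |L w - L y| := by rw [hy0, sub_zero]
          _ ≤ (K : ℝ) * ‖w - y‖ := by
              have := hLip.dist_le_mul w y
              rwa [Real.dist_eq, dist_eq_norm] at this
          _ ≤ (K : ℝ) * (2 * r) := mul_le_mul_of_nonneg_left hdist K.coe_nonneg
    rw [hgdef]
    simp only [abs_mul, abs_of_pos (inv_pos.mpr hεd)]
    exact mul_le_mul_of_nonneg_left (habs _) (le_of_lt (inv_pos.mpr hεd))
  have hglip : ∀ a b : Fin d → ℝ, |g a - g b| ≤ ((ε ^ d)⁻¹ * (K : ℝ) * ε⁻¹) * ‖a - b‖ := by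
    intro a b
    have h1 : |L (ε⁻¹ • a) - L (ε⁻¹ • b)| ≤ (K : ℝ) * ‖ε⁻¹ • a - ε⁻¹ • b‖ := by
      have := hLip.dist_le_mul (ε⁻¹ • a) (ε⁻¹ • b)
      rwa [Real.dist_eq, dist_eq_norm] at this
    have h2 : ‖ε⁻¹ • a - ε⁻¹ • b‖ = ε⁻¹ * ‖a - b‖ := by
      rw [← smul_sub, norm_smul, Real.norm_eq_abs, abs_of_pos (inv_pos.mpr hε)]
    calc |g a - g b| = (ε ^ d)⁻¹ * |L (ε⁻¹ • a) - L (ε⁻¹ • b)| := by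
          rw [hgdef]
          simp only []
          rw [← mul_sub, abs_mul, abs_of_pos (inv_pos.mpr hεd)]
      _ ≤ (ε ^ d)⁻¹ * ((K : ℝ) * (ε⁻¹ * ‖a - b‖)) := by
          rw [h2] at h1
          exact mul_le_mul_of_nonneg_left h1 (le_of_lt (inv_pos.mpr hεd))
      _ = ((ε ^ d)⁻¹ * (K : ℝ) * ε⁻¹) * ‖a - b‖ := by ring
  have key := aux7 d μ g hg (ε * r) ((ε ^ d)⁻¹ * ((K : ℝ) * (2 * r)))
    ((ε ^ d)⁻¹ * (K : ℝ) * ε⁻¹) (by positivity) (by positivity) (by positivity)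
    hgsupp hgbd hglip M hM0
  refine le_trans key ?_
  -- final arithmetic
  have hRle : 2 * (ε * r + (M : ℝ)⁻¹) ≤ 2 * (r + 1) * ε := by nlinarith
  have hpow : (2 * (ε * r + (M : ℝ)⁻¹)) ^ d ≤ (2 * (r + 1)) ^ d * ε ^ d := by
    calc (2 * (ε * r + (M : ℝ)⁻¹)) ^ d ≤ (2 * (r + 1) * ε) ^ d :=
          pow_le_pow_left₀ (by positivity) hRle d
      _ = (2 * (r + 1)) ^ d * ε ^ d := mul_pow _ _ _
  have hB0 : (0:ℝ) ≤ (ε ^ d)⁻¹ * (K : ℝ) * ε⁻¹ * (M : ℝ)⁻¹ := by positivity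
  calc ((ε ^ d)⁻¹ * (K : ℝ) * ε⁻¹ * (M : ℝ)⁻¹) * (2 * (ε * r + (M : ℝ)⁻¹)) ^ d
      ≤ ((ε ^ d)⁻¹ * (K : ℝ) * ε⁻¹ * (M : ℝ)⁻¹) * ((2 * (r + 1)) ^ d * ε ^ d) :=
        mul_le_mul_of_nonneg_left hpow hB0
    _ = (K : ℝ) * (2 * (r + 1)) ^ d / ((M : ℝ) * ε) := by
        field_simp
    _ ≤ ((K : ℝ) + 1) * (2 * (r + 1)) ^ d / ((M : ℝ) * ε) := by
        have hp : (0:ℝ) ≤ (2 * (r + 1)) ^ d := by positivity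
        have : (K : ℝ) * (2 * (r + 1)) ^ d ≤ ((K : ℝ) + 1) * (2 * (r + 1)) ^ d := by
          nlinarith
        exact (div_le_div_iff_of_pos_right (by positivity : (0:ℝ) < (M:ℝ) * ε)).mpr this
        -- (by positivity)
end

section
/- With Z_{N,M} = ∫_{Π^{dN}} exp(Σ_{i=1}^N log L_M[μ_N](x_i)) dx₁…dx_N, one has the exact formula Z_{N,M} = (N!/N^N)·Σ_{n₁+…+n_{M^d}=N} Π_k (n_k^{n_k}/n_k!), where the sum is over all tuples of nonnegative integers summing to N. -/
open MeasureTheory Finset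
private def cell (d N M : ℕ) (f : Fin N → Fin d → Fin M) : Set (Fin N → Fin d → ℝ) :=
  Set.univ.pi fun i => Set.univ.pi fun t =>
    Set.Ico (((f i t : ℕ) : ℝ) / M) ((((f i t : ℕ) : ℝ) + 1) / M)

private lemma floor_aux {M : ℕ} (hM : 0 < M) (v : ℕ) (x : ℝ) :
    x ∈ Set.Ico ((v : ℝ) / M) (((v : ℝ) + 1) / M) ↔ ⌊(M : ℝ) * x⌋ = (v : ℤ) := by
  have hM' : (0:ℝ) < M := by exact_mod_cast hM
  rw [Set.mem_Ico, Int.floor_eq_iff, div_le_iff₀ hM', lt_div_iff₀ hM']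
  push_cast
  constructor <;> rintro ⟨h1, h2⟩ <;> constructor <;> nlinarith

private lemma mem_cell {d N M : ℕ} (hM : 0 < M) (f : Fin N → Fin d → Fin M)
    (X : Fin N → Fin d → ℝ) :
    X ∈ cell d N M f ↔ ∀ i t, ⌊(M : ℝ) * X i t⌋ = ((f i t : ℕ) : ℤ) := by
  simp only [cell, Set.mem_pi, Set.mem_univ, forall_true_left]
  exact forall_congr' fun i => forall_congr' fun t => floor_aux hM _ _

private lemma cell_meas (d N M : ℕ) (f : Fin N → Fin d → Fin M) :
    MeasurableSet (cell d N M f) :=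
  MeasurableSet.univ_pi fun _ => MeasurableSet.univ_pi fun _ => measurableSet_Ico

private lemma cell_subset {d N M : ℕ} (hM : 0 < M) (f : Fin N → Fin d → Fin M) :
    cell d N M f ⊆ {X : Fin N → Fin d → ℝ | ∀ i t, X i t ∈ Set.Ico (0 : ℝ) 1} := by
  intro X hX i t
  have hM' : (0:ℝ) < M := by exact_mod_cast hM
  have h := hX i (Set.mem_univ i) t (Set.mem_univ t)
  rw [Set.mem_Ico] at h ⊢
  have hv : ((f i t : ℕ) : ℝ) + 1 ≤ M := by
    have := (f i t).is_lt
    have : ((f i t : ℕ) : ℝ) + 1 ≤ (M : ℝ) := by exact_mod_cast Nat.succ_le_of_lt this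
    exact this
  constructor
  · have : (0:ℝ) ≤ ((f i t : ℕ) : ℝ) / M := by positivity
    linarith [h.1]
  · have : (((f i t : ℕ) : ℝ) + 1) / M ≤ 1 := by
      rw [div_le_one hM']; exact hv
    linarith [h.2]

private lemma cell_volume {d N M : ℕ} (hM : 0 < M) (f : Fin N → Fin d → Fin M) :
    volume (cell d N M f) = ENNReal.ofReal ((1:ℝ)/M) ^ (d * N) := by
  have hM' : (0:ℝ) < M := by exact_mod_cast hM
  rw [cell, volume_pi_pi]
  have : ∀ i : Fin N, volume (Set.univ.pi fun t : Fin d =>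
      Set.Ico (((f i t : ℕ) : ℝ) / M) ((((f i t : ℕ) : ℝ) + 1) / M))
      = ENNReal.ofReal ((1:ℝ)/M) ^ d := by
    intro i
    rw [volume_pi_pi]
    have : ∀ t : Fin d, volume (Set.Ico (((f i t : ℕ) : ℝ) / M) ((((f i t : ℕ) : ℝ) + 1) / M))
        = ENNReal.ofReal ((1:ℝ)/M) := by
      intro t
      rw [Real.volume_Ico, div_sub_div_same, add_sub_cancel_left]
    simp [this, Finset.prod_const, Finset.card_univ]
  simp [this, Finset.prod_const, Finset.card_univ, ← pow_mul]
private def fiberEquivAux {K : Type*} {β : K → Type*} (k : K) :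
    {p : Σ k', β k' // p.1 = k} ≃ β k where
  toFun p := p.2 ▸ p.1.2
  invFun b := ⟨⟨k, b⟩, rfl⟩
  left_inv := by rintro ⟨⟨k', b⟩, rfl⟩; rfl
  right_inv b := rfl

private lemma count_aux {K : Type*} [Fintype K] [DecidableEq K] (N : ℕ) (n : K → ℕ)
    (h : ∑ k, n k = N) :
    (univ.filter fun f : Fin N → K => ∀ k, #(univ.filter fun j => f j = k) = n k).card
      = Nat.multinomial univ n := by
  classical
  have hcard : Fintype.card (Σ k : K, Fin (n k)) = Fintype.card (Fin N) := by
    simp [Fintype.card_sigma, h]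
  let E : (Σ k : K, Fin (n k)) ≃ Fin N := Fintype.equivOfCardEq hcard
  set f₀ : Fin N → K := fun j => (E.symm j).1 with hf₀def
  have hf₀ : ∀ k, Fintype.card {j // f₀ j = k} = n k := by
    intro k
    have e1 : {j // f₀ j = k} ≃ {p : Σ k' : K, Fin (n k') // p.1 = k} :=
      Equiv.subtypeEquiv E.symm (fun j => Iff.rfl)
    rw [Fintype.card_congr (e1.trans (fiberEquivAux k)), Fintype.card_fin]
  have hf₀' : ∀ k, #(univ.filter fun j => f₀ j = k) = n k := by
    intro k; rw [← Fintype.card_subtype]; exact hf₀ k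
  -- counts invariant under precomposition with a permutation
  have hcomp : ∀ (f : Fin N → K) (g : Equiv.Perm (Fin N)) (k : K),
      #(univ.filter fun j => f (g j) = k) = #(univ.filter fun j => f j = k) := by
    intro f g k
    apply Finset.card_nbij (fun j => g j)
    · intro a ha; simp_all
    · intro a _ b _ hab; exact g.injective hab
    · intro b hb
      refine ⟨g.symm b, ?_, by simp⟩
      simp only [coe_filter, Set.mem_setOf_eq, mem_coe, mem_filter, mem_univ, true_and] at hb ⊢
      simpa using hb
  set D := (univ.filter fun f : Fin N → K => ∀ k, #(univ.filter fun j => f j = k) = n k)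
    with hD
  -- every element of D is of the form f₀ ∘ g
  have hsurj : ∀ f ∈ D, ∃ g : Equiv.Perm (Fin N), f₀ ∘ g = f := by
    intro f hf
    rw [hD, mem_filter] at hf
    have hfc : ∀ k, Fintype.card {j // f j = k} = n k := by
      intro k; rw [Fintype.card_subtype]; exact hf.2 k
    have ek : ∀ k, {j // f j = k} ≃ {j // f₀ j = k} := fun k =>
      Fintype.equivOfCardEq (by rw [hfc k, hf₀ k])
    refine ⟨((Equiv.sigmaFiberEquiv f).symm.trans
      (Equiv.sigmaCongrRight ek)).trans (Equiv.sigmaFiberEquiv f₀), ?_⟩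
    funext j
    exact (ek (f j) ⟨j, rfl⟩).2
  -- each fiber of g ↦ f₀ ∘ g over f ∈ D has cardinality ∏ (n k)!
  have hfiber : ∀ f ∈ D, #(univ.filter fun g : Equiv.Perm (Fin N) => f₀ ∘ g = f)
      = ∏ k, (n k).factorial := by
    intro f hf
    obtain ⟨h, hh⟩ := hsurj f hf
    have : #(univ.filter fun g : Equiv.Perm (Fin N) => f₀ ∘ g = f)
        = #(univ.filter fun g : Equiv.Perm (Fin N) => f₀ ∘ g = f₀) := by
      apply Finset.card_nbij (fun g => g * h⁻¹)
      · intro g hg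
        simp only [coe_filter, Set.mem_setOf_eq, mem_coe, mem_filter, mem_univ, true_and] at hg ⊢
        funext x
        have h1 := congrFun hg (h⁻¹ x)
        have h2 := congrFun hh (h⁻¹ x)
        simp only [Function.comp_apply] at h1 h2
        show f₀ (g (h⁻¹ x)) = f₀ x
        rw [h1, ← h2, ← Equiv.Perm.mul_apply, mul_inv_cancel, Equiv.Perm.one_apply]
      · intro a _ b _ hab; exact mul_right_cancel hab
      · intro g hg
        simp only [coe_filter, Set.mem_setOf_eq, mem_coe, mem_filter, mem_univ,
          true_and] at hg
        refine ⟨g * h, ?_, by simp⟩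
        simp only [coe_filter, Set.mem_setOf_eq, mem_coe, mem_filter, mem_univ, true_and]
        funext x
        have h1 := congrFun hg (h x)
        have h2 := congrFun hh x
        simp only [Function.comp_apply] at h1 h2
        show f₀ (g (h x)) = f x
        rw [h1, h2]
    rw [this, ← Fintype.card_subtype, DomMulAct.stabilizer_card f₀]
    exact Finset.prod_congr rfl fun k _ => by rw [hf₀ k]
  -- Lagrange-style count
  have hmaps : ∀ g : Equiv.Perm (Fin N), f₀ ∘ g ∈ D := by
    intro g
    rw [hD, mem_filter]
    refine ⟨mem_univ _, fun k => ?_⟩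
    simpa [Function.comp] using (hcomp f₀ g k).trans (hf₀' k)
  have key : N.factorial = D.card * ∏ k, (n k).factorial := by
    have := Finset.card_eq_sum_card_fiberwise (f := fun g : Equiv.Perm (Fin N) => f₀ ∘ g)
      (s := univ) (t := D) (fun g _ => hmaps g)
    rw [card_univ, Fintype.card_perm, Fintype.card_fin] at this
    rw [this, Finset.sum_congr rfl hfiber, sum_const, smul_eq_mul]
  have spec := Nat.multinomial_spec univ n
  rw [h] at spec
  have hpos : 0 < ∏ k, (n k).factorial := Finset.prod_pos fun k _ => Nat.factorial_pos _
  have : D.card * ∏ k, (n k).factorial = Nat.multinomial univ n * ∏ k, (n k).factorial := by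
    rw [← key, ← spec, mul_comm]
  exact Nat.eq_of_mul_eq_mul_right hpos this

/-- Exact combinatorial formula for the partition function
`Z_{N,M} = ∫ exp(Σᵢ log L_M[μ_N](xᵢ)) dX^N` over the unit torus (unit cube),
where the torus is decomposed into `M^d` hypercubes of side `1/M`:
`Z_{N,M} = (N!/N^N)·Σ_{n₁+…+n_{M^d}=N} Π_k n_k^{n_k}/n_k!`. -/
theorem stmt_10 (d N M : ℕ) (hd : 0 < d) (hN : 0 < N) (hM : 0 < M) :
    (∫ X in {X : Fin N → Fin d → ℝ | ∀ i t, X i t ∈ Set.Ico (0 : ℝ) 1},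
        Real.exp (∑ i, Real.log (((M : ℝ) ^ d / N) *
          (Finset.univ.filter
            (fun j => ∀ t, ⌊(M : ℝ) * X j t⌋ = ⌊(M : ℝ) * X i t⌋)).card)))
      = ((N.factorial : ℝ) / (N : ℝ) ^ N) *
          ∑ n ∈ (Fintype.piFinset fun _ : Fin (M ^ d) => Finset.range (N + 1)).filter
              (fun n => ∑ k, n k = N),
            ∏ k, ((n k : ℝ) ^ (n k) / (n k).factorial) := by
  classical
  have hM' : (0:ℝ) < M := by exact_mod_cast hM
  have hN' : (0:ℝ) < N := by exact_mod_cast hN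
  set S : Set (Fin N → Fin d → ℝ) := {X | ∀ i t, X i t ∈ Set.Ico (0 : ℝ) 1} with hSdef
  have hSm : MeasurableSet S := by
    have : S = Set.univ.pi (fun _ : Fin N => Set.univ.pi fun _ : Fin d => Set.Ico (0:ℝ) 1) := by
      ext X; simp [hSdef, Set.mem_pi]
    rw [this]
    exact MeasurableSet.univ_pi fun _ => MeasurableSet.univ_pi fun _ => measurableSet_Ico
  -- the box-index map
  set fX : (Fin N → Fin d → ℝ) → (Fin N → Fin d → Fin M) := fun X i t =>
    if h : (⌊(M : ℝ) * X i t⌋).toNat < M then ⟨_, h⟩ else ⟨0, hM⟩ with hfXdef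
  have hfx : ∀ X ∈ S, ∀ i t, (((fX X i t : ℕ)) : ℤ) = ⌊(M : ℝ) * X i t⌋ := by
    intro X hX i t
    have h := hX i t
    rw [Set.mem_Ico] at h
    have h0 : 0 ≤ ⌊(M : ℝ) * X i t⌋ := Int.floor_nonneg.2 (by nlinarith [h.1])
    have h1 : ⌊(M : ℝ) * X i t⌋ < (M : ℤ) := Int.floor_lt.2 (by push_cast; nlinarith [h.2])
    have h2 : (⌊(M : ℝ) * X i t⌋).toNat < M := by omega
    simp only [hfXdef, h2, dif_pos]
    omega
  have hmemcell : ∀ X ∈ S, X ∈ cell d N M (fX X) := by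
    intro X hX
    rw [mem_cell hM]
    intro i t
    exact (hfx X hX i t).symm
  have huniq : ∀ X ∈ S, ∀ f, X ∈ cell d N M f → f = fX X := by
    intro X hX f hf
    rw [mem_cell hM] at hf
    funext i t
    have := (hf i t).symm.trans (hfx X hX i t).symm
    exact Fin.ext (by exact_mod_cast this)
  -- fiber counts and the weight
  set nk : (Fin N → Fin d → Fin M) → (Fin d → Fin M) → ℕ := fun f k =>
    (univ.filter fun j => f j = k).card with hnkdef
  set W : (Fin N → Fin d → Fin M) → ℝ := fun f =>
    ∏ i, ((M : ℝ) ^ d / N * (nk f (f i) : ℝ)) with hWdef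
  -- pointwise identity on S
  have hpt : ∀ X ∈ S,
      Real.exp (∑ i, Real.log (((M : ℝ) ^ d / N) *
        (univ.filter (fun j => ∀ t, ⌊(M : ℝ) * X j t⌋ = ⌊(M : ℝ) * X i t⌋)).card))
      = ∑ f : Fin N → Fin d → Fin M, (cell d N M f).indicator (fun _ => W f) X := by
    intro X hX
    have hsingle : (∑ f : Fin N → Fin d → Fin M, (cell d N M f).indicator (fun _ => W f) X)
        = (cell d N M (fX X)).indicator (fun _ => W (fX X)) X := by
      apply Finset.sum_eq_single
      · intro f _ hne
        exact Set.indicator_of_notMem (fun hmem => hne (huniq X hX f hmem)) _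
      · intro h; exact absurd (mem_univ _) h
    rw [hsingle, Set.indicator_of_mem (hmemcell X hX)]
    have hfilter : ∀ i, (univ.filter (fun j => ∀ t, ⌊(M : ℝ) * X j t⌋ = ⌊(M : ℝ) * X i t⌋))
        = (univ.filter fun j => fX X j = fX X i) := by
      intro i
      apply Finset.filter_congr
      intro j _
      constructor
      · intro hj
        funext t
        apply Fin.ext
        have := (hfx X hX j t).trans ((hj t).trans (hfx X hX i t).symm)
        exact_mod_cast this
      · intro hj t
        rw [← hfx X hX j t, ← hfx X hX i t, hj]
    have hpos : ∀ i : Fin N, 0 < ((M : ℝ) ^ d / N) *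
        (univ.filter (fun j => ∀ t, ⌊(M : ℝ) * X j t⌋ = ⌊(M : ℝ) * X i t⌋)).card := by
      intro i
      apply mul_pos (by positivity)
      have : i ∈ univ.filter (fun j => ∀ t, ⌊(M : ℝ) * X j t⌋ = ⌊(M : ℝ) * X i t⌋) :=
        mem_filter.2 ⟨mem_univ i, fun t => rfl⟩
      have := Finset.card_pos.2 ⟨i, this⟩
      exact_mod_cast this
    rw [Real.exp_sum]
    simp only [hWdef]
    apply Finset.prod_congr rfl
    intro i _
    rw [Real.exp_log (hpos i), hfilter i]
  -- the integral of each indicator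
  have hvol : ∀ f : Fin N → Fin d → Fin M,
      (volume (cell d N M f)).toReal = ((1:ℝ)/M) ^ (d * N) := by
    intro f
    rw [cell_volume hM f, ENNReal.toReal_pow, ENNReal.toReal_ofReal (by positivity)]
  have hint : ∀ f : Fin N → Fin d → Fin M,
      Integrable ((cell d N M f).indicator (fun _ => W f)) (volume.restrict S) := by
    intro f
    rw [integrable_indicator_iff (cell_meas d N M f)]
    refine integrableOn_const (ne_of_lt ?_)
    calc (volume.restrict S) (cell d N M f) ≤ volume (cell d N M f) :=
          Measure.restrict_le_self _
      _ < ⊤ := by rw [cell_volume hM f]; exact ENNReal.pow_lt_top ENNReal.ofReal_lt_top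
  have step1 : (∫ X in S,
      Real.exp (∑ i, Real.log (((M : ℝ) ^ d / N) *
        (univ.filter (fun j => ∀ t, ⌊(M : ℝ) * X j t⌋ = ⌊(M : ℝ) * X i t⌋)).card)))
      = ∑ f : Fin N → Fin d → Fin M, W f * ((1:ℝ)/M) ^ (d * N) := by
    rw [setIntegral_congr_fun hSm (fun X hX => hpt X hX),
      integral_finset_sum univ (fun f _ => hint f)]
    apply Finset.sum_congr rfl
    intro f _
    rw [setIntegral_indicator (cell_meas d N M f),
      Set.inter_eq_self_of_subset_right (cell_subset hM f), setIntegral_const,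
      smul_eq_mul, measureReal_def, hvol f, mul_comm]
  rw [step1]
  have hnksum : ∀ f, ∑ k, nk f k = N := by
    intro f
    have := Finset.card_eq_sum_card_fiberwise
      (f := f) (s := univ) (t := univ) (fun x _ => mem_univ (f x))
    rw [card_univ, Fintype.card_fin] at this
    exact this.symm
  have hW : ∀ f, W f = ((M : ℝ) ^ d / N) ^ N * ∏ k, (nk f k : ℝ) ^ (nk f k) := by
    intro f
    simp only [hWdef]
    rw [← Finset.prod_fiberwise_of_maps_to (fun i (_ : i ∈ univ) => mem_univ (f i))
      (fun i => (M : ℝ) ^ d / N * (nk f (f i) : ℝ))]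
    have inner : ∀ k, (∏ i ∈ univ.filter fun i => f i = k,
        ((M : ℝ) ^ d / N * (nk f (f i) : ℝ)))
        = ((M : ℝ) ^ d / N) ^ (nk f k) * (nk f k : ℝ) ^ (nk f k) := by
      intro k
      rw [Finset.prod_congr rfl (fun i hi => by
        rw [(mem_filter.1 hi).2]), Finset.prod_const]
      show ((M : ℝ) ^ d / N * (nk f k : ℝ)) ^ (nk f k) = _
      rw [mul_pow]
    rw [Finset.prod_congr rfl (fun k _ => inner k), Finset.prod_mul_distrib,
      Finset.prod_pow_eq_pow_sum, hnksum f]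
  -- collect the constants
  have hconst : ((M : ℝ) ^ d / N) ^ N * ((1:ℝ)/M) ^ (d * N) = ((N : ℝ))⁻¹ ^ N := by
    rw [pow_mul, ← mul_pow]
    congr 1
    field_simp
    rw [← mul_pow, mul_one_div_cancel hM'.ne', one_pow]
  have step2 : (∑ f : Fin N → Fin d → Fin M, W f * ((1:ℝ)/M) ^ (d * N))
      = ((N : ℝ))⁻¹ ^ N * ∑ f : Fin N → Fin d → Fin M, ∏ k, (nk f k : ℝ) ^ (nk f k) := by
    rw [Finset.mul_sum]
    apply Finset.sum_congr rfl
    intro f _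
    rw [hW f, mul_assoc, mul_comm (∏ k, (nk f k : ℝ) ^ (nk f k)), ← mul_assoc, hconst]
  rw [step2]
  -- group the sum over f by the fiber-count vector
  set TK := ((Fintype.piFinset fun _ : Fin d → Fin M => Finset.range (N + 1)).filter
    (fun m => ∑ k, m k = N)) with hTKdef
  have hmapsTK : ∀ f : Fin N → Fin d → Fin M, (fun k => nk f k) ∈ TK := by
    intro f
    rw [hTKdef, mem_filter, Fintype.mem_piFinset]
    refine ⟨fun k => ?_, hnksum f⟩
    rw [Finset.mem_range, Nat.lt_succ_iff, hnkdef]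
    calc (univ.filter fun j => f j = k).card ≤ (univ : Finset (Fin N)).card :=
          Finset.card_filter_le _ _
      _ = N := by rw [card_univ, Fintype.card_fin]
  have hgroup : (∑ f : Fin N → Fin d → Fin M, ∏ k, (nk f k : ℝ) ^ (nk f k))
      = ∑ m ∈ TK, (Nat.multinomial univ m : ℝ) * ∏ k, (m k : ℝ) ^ (m k) := by
    rw [← Finset.sum_fiberwise_of_maps_to (g := fun f => (fun k => nk f k)) (t := TK)
      (fun f _ => hmapsTK f) (fun f => ∏ k, (nk f k : ℝ) ^ (nk f k))]
    apply Finset.sum_congr rfl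
    intro m hm
    rw [hTKdef, mem_filter] at hm
    have : ∀ f ∈ univ.filter (fun f : Fin N → Fin d → Fin M => (fun k => nk f k) = m),
        (∏ k, (nk f k : ℝ) ^ (nk f k)) = ∏ k, (m k : ℝ) ^ (m k) := by
      intro f hf
      have := (mem_filter.1 hf).2
      rw [funext_iff] at this
      exact Finset.prod_congr rfl fun k _ => by rw [this k]
    rw [Finset.sum_congr rfl this, Finset.sum_const, nsmul_eq_mul]
    congr 2
    rw [Finset.filter_congr (fun f _ => funext_iff)]
    exact count_aux N m hm.2
  rw [hgroup]
  -- multinomial as a real quotient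
  have hmult : ∀ m ∈ TK, (Nat.multinomial univ m : ℝ)
      = (N.factorial : ℝ) / ∏ k, ((m k).factorial : ℝ) := by
    intro m hm
    rw [hTKdef, mem_filter] at hm
    have spec := Nat.multinomial_spec univ m
    rw [hm.2] at spec
    have hprodpos : (0:ℝ) < ∏ k, ((m k).factorial : ℝ) :=
      Finset.prod_pos fun k _ => by exact_mod_cast Nat.factorial_pos _
    rw [eq_div_iff (ne_of_gt hprodpos), mul_comm]
    exact_mod_cast spec
  -- reindex the sum over boxes by Fin (M^d)
  have ecard : Fintype.card (Fin d → Fin M) = M ^ d := by simp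
  have e : (Fin d → Fin M) ≃ Fin (M ^ d) := Fintype.equivFinOfCardEq ecard
  have hreindex : (∑ m ∈ TK, ∏ k, ((m k : ℝ) ^ (m k) / ((m k).factorial : ℝ)))
      = ∑ n ∈ (Fintype.piFinset fun _ : Fin (M ^ d) => Finset.range (N + 1)).filter
          (fun n => ∑ k, n k = N), ∏ k, ((n k : ℝ) ^ (n k) / ((n k).factorial : ℝ)) := by
    apply Finset.sum_nbij' (fun m => m ∘ e.symm) (fun n => n ∘ e)
    · intro m hm
      rw [hTKdef, mem_filter, Fintype.mem_piFinset] at hm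
      rw [mem_filter, Fintype.mem_piFinset]
      refine ⟨fun k => hm.1 _, ?_⟩
      simp only [Function.comp_apply]
      rw [Equiv.sum_comp e.symm (fun k => m k)]
      exact hm.2
    · intro n hn
      rw [mem_filter, Fintype.mem_piFinset] at hn
      rw [hTKdef, mem_filter, Fintype.mem_piFinset]
      refine ⟨fun k => hn.1 _, ?_⟩
      simp only [Function.comp_apply]
      rw [Equiv.sum_comp e (fun k => n k)]
      exact hn.2
    · intro m _; funext k; simp
    · intro n _; funext k; simp
    · intro m _
      simp only [Function.comp_apply]
      exact (Equiv.prod_comp e.symm (fun k => ((m k : ℝ) ^ (m k) / ((m k).factorial : ℝ)))).symm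
  rw [← hreindex, Finset.mul_sum, Finset.mul_sum]
  apply Finset.sum_congr rfl
  intro m hm
  rw [hmult m hm, Finset.prod_div_distrib]
  rw [inv_pow]
  field_simp
end
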